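/- Let B = S_{m+s,n+t}/J, with J = ({g_i x_i − f_i}_{i=m+1}^{m+s} ∪ {g′_j ρ_j − f′_j}_{j=n+1}^{n+t}), be a generalized ring of fractions over S_{m,n}, and let X := {p ∈ (K°)^{m+s} × (K°°)^{n+t} : p ∈ V(J)_K and ∏_{i=m+1}^{m+s} g_i(p) · ∏_{j=n+1}^{n+t} g′_j(p) ≠ 0}. Then the coordinate projection π : (K°)^{m+s} × (K°°)^{n+t} → (K°)^m × (K°°)^n maps X bijectively onto Dom_{m,n} B, and if X is nonempty then X is an (m+n)-dimensional K-analytic manifold. -/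

import Mathlib

/- Common framework for formalizing "Parameterized stratification and piece number of
   D-semianalytic sets" over a complete non-Archimedean field K. -/

open Filter Topology

noncomputable section

namespace DSemi

variable (K : Type) [NontriviallyNormedField K]

/-- The variable index type for `S_{m,n}`: `m` variables of type `x` (ranging over the
closed unit ball `K°`) and `n` variables of type `ρ` (ranging over the open unit ball `K°°`). -/
abbrev Vars (m n : ℕ) := Fin m ⊕ Fin n

/-- The mixed polydisc `(K°)^m × (K°°)^n`. -/
def MixedPolydisc (m n : ℕ) : Set (Vars m n → K) :=
  {p | (∀ i : Fin m, ‖p (Sum.inl i)‖ ≤ 1) ∧ ∀ j : Fin n, ‖p (Sum.inr j)‖ < 1}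

/-- Inclusion of the original variables into an enlarged variable set. -/
def inclVars {m n s t : ℕ} : Vars m n → Vars (m + s) (n + t) :=
  Sum.map (Fin.castAdd s) (Fin.castAdd t)

/-- The newly adjoined variables inside an enlarged variable set. -/
def newVars {m n s t : ℕ} : Vars s t → Vars (m + s) (n + t) :=
  Sum.map (Fin.natAdd m) (Fin.natAdd n)

/-- Evaluation of a (multivariate) power series at a point, as the sum of the
corresponding series of monomial values (junk value if not summable). -/
def evalPS {σ : Type} (f : MvPowerSeries σ K) (p : σ → K) : K :=
  ∑' d : σ →₀ ℕ, (MvPowerSeries.coeff d f) * d.prod fun i k => p i ^ k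

/-- The subring `E[a₀,a₁,…]` generated by `E` and a zero sequence. -/
def genSubring (E : Subring K) (a : ℕ → K) : Subring K :=
  Subring.closure ((E : Set K) ∪ Set.range a)

/-- The localization of `E[a₀,a₁,…]` at the multiplicative set of its elements of
absolute value `1`, realized as a subring of `K`. -/
def locSubring (E : Subring K) (a : ℕ → K) : Subring K where
  carrier := {x | ∃ b ∈ genSubring K E a, ∃ s ∈ genSubring K E a, ‖s‖ = 1 ∧ x * s = b}
  one_mem' := ⟨1, one_mem _, 1, one_mem _, norm_one, one_mul 1⟩
  zero_mem' := ⟨0, zero_mem _, 1, one_mem _, norm_one, by ring⟩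
  add_mem' := by
    rintro x y ⟨b, hb, s, hs, hsn, hxs⟩ ⟨b', hb', s', hs', hsn', hys⟩
    exact ⟨b * s' + b' * s, add_mem (mul_mem hb hs') (mul_mem hb' hs), s * s',
      mul_mem hs hs', by rw [norm_mul, hsn, hsn', one_mul],
      by linear_combination s' * hxs + s * hys⟩
  mul_mem' := by
    rintro x y ⟨b, hb, s, hs, hsn, hxs⟩ ⟨b', hb', s', hs', hsn', hys⟩
    exact ⟨b * b', mul_mem hb hb', s * s', mul_mem hs hs',
      by rw [norm_mul, hsn, hsn', one_mul],
      by linear_combination (y * s') * hxs + b * hys⟩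
  neg_mem' := by
    rintro x ⟨b, hb, s, hs, hsn, hxs⟩
    exact ⟨-b, neg_mem hb, s, hs, hsn, by linear_combination -hxs⟩

/-- The ring `B = (E[a₀,a₁,…]_{{a : |a|=1}})^∧`: the completion (topological closure inside
the complete field `K`) of the localization above. -/
def ringB (E : Subring K) (a : ℕ → K) : Subring K :=
  (locSubring K E a).topologicalClosure

/-- A zero sequence in `K°`. -/
def IsZeroSeq (a : ℕ → K) : Prop :=
  (∀ i, ‖a i‖ ≤ 1) ∧ Tendsto a atTop (nhds 0)

/-- `f` is a separated power series over `(E,K)`: up to a constant `c ∈ K`, all of its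
coefficients lie in some ring `B ∈ 𝔅` and, for each fixed `ρ`-exponent, the coefficients
tend to `0` in the `x`-exponents; this realizes
`S_{m,n}(E,K) = K ⊗_{K°} (colim_B B⟨x⟩[[ρ]])` inside `MvPowerSeries`. -/
def IsSepSeries (E : Subring K) {m n : ℕ} (f : MvPowerSeries (Vars m n) K) : Prop :=
  ∃ (c : K) (a : ℕ → K), IsZeroSeq K a ∧
    (∀ d : Vars m n →₀ ℕ, ∃ b ∈ ringB K E a, MvPowerSeries.coeff d f = c * b) ∧
    ∀ dρ : Fin n →₀ ℕ,
      Tendsto (fun dx : Fin m →₀ ℕ => MvPowerSeries.coeff (Finsupp.sumElim dx dρ) f)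
        cofinite (nhds 0)

/-- The ring of separated power series `S_{m,n}(E,K)`, as a subalgebra of the formal power
series ring.  (The set of separated power series is closed under the algebra operations, so
the algebra it generates coincides with it.) -/
def SRing (E : Subring K) (m n : ℕ) : Subalgebra K (MvPowerSeries (Vars m n) K) :=
  Algebra.adjoin K {f | IsSepSeries K E f}

/-- `f` only involves the variables from `S`. -/
def SupportedOn {σ : Type} (f : MvPowerSeries σ K) (S : Set σ) : Prop :=
  ∀ d : σ →₀ ℕ, MvPowerSeries.coeff d f ≠ 0 → ↑d.support ⊆ S


/-- A presentation of a generalized ring of fractions over `S_{m,n}`, adjoining `s`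
new `x`-type variables and `t` new `ρ`-type variables.  Each new variable `v` is adjoined
at a stage `stage v` as a fraction `num v / den v`, where the numerator and denominator
only involve the original variables and the variables adjoined at earlier stages. -/
structure GenFracPres (E : Subring K) (m n s t : ℕ) where
  num : Vars s t → MvPowerSeries (Vars (m + s) (n + t)) K
  den : Vars s t → MvPowerSeries (Vars (m + s) (n + t)) K
  stage : Vars s t → ℕ
  num_sep : ∀ v, IsSepSeries K E (num v)
  den_sep : ∀ v, IsSepSeries K E (den v)
  num_dep : ∀ v, SupportedOn K (num v)
    (Set.range (inclVars (m := m) (n := n) (s := s) (t := t)) ∪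
      newVars '' {w | stage w < stage v})
  den_dep : ∀ v, SupportedOn K (den v)
    (Set.range (inclVars (m := m) (n := n) (s := s) (t := t)) ∪
      newVars '' {w | stage w < stage v})

namespace GenFracPres

variable {K} {E : Subring K} {m n s t : ℕ} (P : GenFracPres K E m n s t)

/-- The set of points of the full variable space which realize the presentation:
they lie in the polydisc, each new coordinate is the prescribed fraction, and each
denominator is nonzero there; this is the semianalytic set `X` associated to the
presentation `B = S_{m+s,n+t}/J`. -/
def lift : Set (Vars (m + s) (n + t) → K) :=
  {q | q ∈ MixedPolydisc K (m + s) (n + t) ∧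
    ∀ v : Vars s t, evalPS K (P.den v) q * q (newVars v) = evalPS K (P.num v) q ∧
      evalPS K (P.den v) q ≠ 0}

/-- Projection to the original coordinates. -/
def proj (_P : GenFracPres K E m n s t) :
    (Vars (m + s) (n + t) → K) → (Vars m n → K) := fun q => q ∘ inclVars

/-- `Dom_{m,n} B`: the domain of the generalized ring of fractions. -/
def Dom : Set (Vars m n → K) := P.proj '' P.lift

/-- The defining relation `g_v · X_v − f_v` of the new variable `v`. -/
def rel (v : Vars s t) : MvPowerSeries (Vars (m + s) (n + t)) K :=
  P.den v * MvPowerSeries.X (newVars v) - P.num v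

/-- The ideal of relations `J ⊆ S_{m+s,n+t}`, so that `B = S_{m+s,n+t}/J`. -/
def relIdeal : Ideal ↥(SRing K E (m + s) (n + t)) :=
  Ideal.span {F | (F : MvPowerSeries (Vars (m + s) (n + t)) K) ∈ Set.range P.rel}

/-- `Dom_{m,n} B ∩ V(I)_K` for an ideal `I` (given by the ideal of `S_{m+s,n+t}` of all
representatives of members of `I`). -/
def VDom (I : Ideal ↥(SRing K E (m + s) (n + t))) : Set (Vars m n → K) :=
  P.proj '' {q | q ∈ P.lift ∧
    ∀ F ∈ I, evalPS K (F : MvPowerSeries (Vars (m + s) (n + t)) K) q = 0}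

/-- The set of elements of `S_{m+s,n+t}` vanishing identically on (the part of the lifted
set over) `Y`; the corresponding ideal of `B` is `𝕀(Y)` for `Y ⊆ Dom_{m,n} B`. -/
def vanishSet (Y : Set (Vars m n → K)) : Set ↥(SRing K E (m + s) (n + t)) :=
  {F | ∀ q ∈ P.lift, P.proj q ∈ Y →
    evalPS K (F : MvPowerSeries (Vars (m + s) (n + t)) K) q = 0}

/-- The presentation is an `R`-domain presentation: the new variables adjoined at a common
stage share a common denominator `g`, and at each stage the ideal generated by `g` and the
numerators of that stage is the unit ideal of the previously constructed ring. -/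
def IsRPres : Prop :=
  (∀ v w, P.stage v = P.stage w → P.den v = P.den w) ∧
  ∀ v, Ideal.span {F : ↥(SRing K E (m + s) (n + t)) |
      (∃ w, P.stage w < P.stage v ∧ (F : MvPowerSeries (Vars (m + s) (n + t)) K) = P.rel w) ∨
      (F : MvPowerSeries (Vars (m + s) (n + t)) K) = P.den v ∨
      ∃ w, P.stage w = P.stage v ∧
        (F : MvPowerSeries (Vars (m + s) (n + t)) K) = P.num w} = ⊤

end GenFracPres

/-- A `D`-semianalytic subset of `(K°)^m × (K°°)^n`: a finite union of sets
`Dom_{m,n} B_i ∩ V(I_i)_K`. -/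
def IsDSemianalytic (E : Subring K) {m n : ℕ} (X : Set (Vars m n → K)) : Prop :=
  ∃ (k : ℕ) (s t : Fin k → ℕ) (P : ∀ i, GenFracPres K E m n (s i) (t i))
    (I : ∀ i, Ideal ↥(SRing K E (m + s i) (n + t i))),
    X = ⋃ i, (P i).VDom (I i)

/-- A subanalytic subset of `(K°)^m × (K°°)^n`: the image of a `D`-semianalytic set
under a coordinate projection. -/
def IsSubanalytic (E : Subring K) {m n : ℕ} (X : Set (Vars m n → K)) : Prop :=
  ∃ (M N : ℕ) (Y : Set (Vars (m + M) (n + N) → K)),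
    IsDSemianalytic K E Y ∧ X = (fun q => q ∘ inclVars) '' Y


/-- There is a coordinate projection onto `d` coordinates under which the image of `X`
has an interior point. -/
def HasDimWitness {m n : ℕ} (X : Set (Vars m n → K)) (d : ℕ) : Prop :=
  ∃ s : Finset (Vars m n), s.card = d ∧
    (interior ((fun p (v : {x // x ∈ s}) => p ↑v) '' X)).Nonempty

/-- There is a coordinate projection onto `d` coordinates under which the image of `X`
is somewhere dense. -/
def HasDenseWitness {m n : ℕ} (X : Set (Vars m n → K)) (d : ℕ) : Prop :=
  ∃ s : Finset (Vars m n), s.card = d ∧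
    (interior (closure ((fun p (v : {x // x ∈ s}) => p ↑v) '' X))).Nonempty

/-- The geometric dimension of `X` (with `g-dim ∅ = ⊥`, playing the role of `-1`). -/
def gdim {m n : ℕ} (X : Set (Vars m n → K)) : WithBot ℕ∞ :=
  sSup {d : WithBot ℕ∞ | ∃ k : ℕ, d = (k : ℕ∞) ∧ HasDimWitness K X k}

/-- The weak dimension of `X` (with `w-dim ∅ = ⊥`, playing the role of `-1`). -/
def wdim {m n : ℕ} (X : Set (Vars m n → K)) : WithBot ℕ∞ :=
  sSup {d : WithBot ℕ∞ | ∃ k : ℕ, d = (k : ℕ∞) ∧ HasDenseWitness K X k}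

/-- `X` (with the subspace topology) is a `d`-dimensional `K`-analytic manifold: it
admits an atlas of charts which are homeomorphisms onto open subsets of `K^d` whose
transition maps are locally given by convergent power series over `K`. -/
def IsKAnalyticManifold {P : Type} [TopologicalSpace P] (X : Set P) (d : ℕ) : Prop :=
  ∃ (ι : Type) (U : ι → Set X) (φ : ι → X → (Fin d → K)),
    (∀ x : X, ∃ i, x ∈ U i) ∧
    (∀ i, IsOpen (U i)) ∧
    (∀ i, ∃ V : Set (Fin d → K), IsOpen V ∧ Set.BijOn (φ i) (U i) V ∧
      ContinuousOn (φ i) (U i) ∧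
      ∃ ψ : (Fin d → K) → X, Set.InvOn ψ (φ i) (U i) V ∧ ContinuousOn ψ V) ∧
    ∀ i j, ∀ x ∈ U i ∩ U j, ∃ r > (0 : ℝ), ∃ F : Fin d → MvPowerSeries (Fin d) K,
      ∀ z ∈ U i ∩ U j, (∀ l, ‖φ i z l - φ i x l‖ < r) →
        ∀ l, φ j z l = evalPS K (F l) fun w => φ i z w - φ i x w

/-- Glue a parameter point `p ∈ (K°)^m × (K°°)^n` and a fiber point
`q ∈ (K°)^M × (K°°)^N` into a point of `(K°)^{m+M} × (K°°)^{n+N}`. -/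
def glue {m n M N : ℕ} (p : Vars m n → K) (q : Vars M N → K) :
    Vars (m + M) (n + N) → K :=
  Sum.elim (Fin.addCases (fun i => p (Sum.inl i)) fun i => q (Sum.inl i))
           (Fin.addCases (fun j => p (Sum.inr j)) fun j => q (Sum.inr j))

/-- The fiber `X(p)` of `X ⊆ (K°)^{m+M} × (K°°)^{n+N}` over the parameter point `p`. -/
def fiberAt {m n M N : ℕ} (X : Set (Vars (m + M) (n + N) → K)) (p : Vars m n → K) :
    Set (Vars M N → K) := {q | glue K p q ∈ X}

/-- The distinguished coordinate of the line `K°` (as the space `(K°)^1 × (K°°)^0`). -/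
def fibCoord : Vars 1 0 := Sum.inl 0

/-- A disc in `K°`: an open or closed ball whose center lies in `K°` and whose radius
belongs to the divisible hull `√|K°|` of the value group. -/
def IsDisc (D : Set (Vars 1 0 → K)) : Prop :=
  ∃ (a : K) (r : ℝ), ‖a‖ ≤ 1 ∧ (∃ (x : K) (k : ℕ), x ≠ 0 ∧ 0 < k ∧ r ^ k = ‖x‖) ∧
    (D = {p | ‖p (fibCoord) - a‖ < r ∧ ‖p (fibCoord)‖ ≤ 1} ∨
     D = {p | ‖p (fibCoord) - a‖ ≤ r ∧ ‖p (fibCoord)‖ ≤ 1})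

/-- A `K`-rational special set: a disc minus a finite union of discs. -/
def IsSpecialSet (S : Set (Vars 1 0 → K)) : Prop :=
  ∃ (D : Set (Vars 1 0 → K)) (k : ℕ) (Ds : Fin k → Set (Vars 1 0 → K)),
    IsDisc K D ∧ (∀ i, IsDisc K (Ds i)) ∧ S = D \ ⋃ i, Ds i

/-- The complexity of (a `K`-rational `R`-domain) `X ⊆ K°`: the least value of
`r + s₁ + ⋯ + s_r` over all decompositions `X = ∪_{i=1}^r (C_i ∖ ∪_{j=1}^{s_i} C_{ij})`
into `K`-rational special sets. -/
def complexity (X : Set (Vars 1 0 → K)) : ℕ∞ :=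
  sInf {c : ℕ∞ | ∃ (r : ℕ) (C : Fin r → Set (Vars 1 0 → K)) (sn : Fin r → ℕ)
    (Ds : ∀ i, Fin (sn i) → Set (Vars 1 0 → K)),
    (∀ i, IsDisc K (C i)) ∧ (∀ i j, IsDisc K (Ds i j)) ∧
    X = ⋃ i, (C i \ ⋃ j, Ds i j) ∧ c = (r : ℕ∞) + ∑ i, (sn i : ℕ∞)}

/-- A semialgebraic subset of `(K°)^m × (K°°)^n`: a finite union of sets defined by
finitely many strict and non-strict norm inequalities between polynomials over `K`. -/
def IsSemialgebraic {m n : ℕ} (X : Set (Vars m n → K)) : Prop :=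
  ∃ (k : ℕ) (a b : Fin k → ℕ)
    (f g : ∀ i, Fin (a i) → MvPolynomial (Vars m n) K)
    (f' g' : ∀ i, Fin (b i) → MvPolynomial (Vars m n) K),
    X = ⋃ i, {p | p ∈ MixedPolydisc K m n ∧
      (∀ j, ‖MvPolynomial.eval p (f i j)‖ < ‖MvPolynomial.eval p (g i j)‖) ∧
      ∀ j, ‖MvPolynomial.eval p (f' i j)‖ ≤ ‖MvPolynomial.eval p (g' i j)‖}


---- part 4 ----

open Classical in
/-- The number of irreducible components of one piece `Dom_{m,n} B ∩ V(I)_K` of a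
presentation: the number of primes in the irredundant prime decomposition of
`𝕀(Dom_{m,n} B ∩ V(I)_K)` (equivalently, of its minimal prime divisors, the ideal
being radical). -/
def icCount {E : Subring K} {m n s t : ℕ} (P : GenFracPres K E m n s t)
    (I : Ideal ↥(SRing K E (m + s) (n + t))) : ℕ∞ :=
  sInf {c : ℕ∞ | ∃ J : Ideal ↥(SRing K E (m + s) (n + t)),
    (J : Set ↥(SRing K E (m + s) (n + t))) = P.vanishSet (P.VDom I) ∧
    c = (J.minimalPrimes.ncard : ℕ∞)}

/-- `#ic X`: the infimum over presentations of `X` of the total number of irreducible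
components of the pieces. -/
def numIC (E : Subring K) {m n : ℕ} (X : Set (Vars m n → K)) : ℕ∞ :=
  sInf {c : ℕ∞ | ∃ (k : ℕ) (s t : Fin k → ℕ) (P : ∀ i, GenFracPres K E m n (s i) (t i))
    (I : ∀ i, Ideal ↥(SRing K E (m + s i) (n + t i))),
    X = ⋃ i, (P i).VDom (I i) ∧ c = ∑ i, icCount K (P i) (I i)}

open Classical in
/-- The piece number `pn X` of a `D`-semianalytic set: the infimum over all dimensional
filterings `𝒮 = (S_d,…,S_0)` of `X` (where `d = g-dim X` and each `S_i` is a finite union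
of `i`-dimensional `D`-semianalytic `K`-analytic manifolds, with `X = S_d ∪ ⋯ ∪ S_0`)
of `pn 𝒮 = Σ_i #ic S_i`; with `pn ∅ = 0`. -/
def pieceNumber (E : Subring K) {m n : ℕ} (X : Set (Vars m n → K)) : ℕ∞ :=
  if X = ∅ then 0 else
  sInf {c : ℕ∞ | ∃ d : ℕ, gdim K X = ((d : ℕ∞) : WithBot ℕ∞) ∧
    ∃ Ss : Fin (d + 1) → Set (Vars m n → K),
      X = ⋃ i, Ss i ∧
      (∀ i : Fin (d + 1), ∃ (k : ℕ) (Ms : Fin k → Set (Vars m n → K)),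
        Ss i = ⋃ j, Ms j ∧ ∀ j, IsDSemianalytic K E (Ms j) ∧
          IsKAnalyticManifold K (Ms j) (i : ℕ)) ∧
      c = ∑ i, numIC K E (Ss i)}

/-- `X` is a `K`-rational `R`-domain in `K°`. -/
def IsKRationalRDomain (E : Subring K) (X : Set (Vars 1 0 → K)) : Prop :=
  ∃ (s t : ℕ) (P : GenFracPres K E 1 0 s t), P.IsRPres ∧ X = P.Dom

/-- The position of a variable within its sort. -/
def varIdx {m n : ℕ} : Vars m n → ℕ := Sum.elim Fin.val Fin.val

open Classical in
/-- `φ` is an elementary Weierstrass change of variables among the variables in `T`: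
for a chosen variable `j ∈ T` and positive exponents `r`, it acts on separated power
series as the substitution sending `v ↦ v + j^{r v}` for the variables `v ∈ T` preceding
`j` and fixing all other variables; we characterize it through its effect on the
associated functions on the polydisc. -/
def IsElemWMove {M N : ℕ} (E : Subring K) (T : Set (Vars M N))
    (φ : ↥(SRing K E M N) ≃ₐ[K] ↥(SRing K E M N)) : Prop :=
  ∃ (j : Vars M N) (r : Vars M N → ℕ), j ∈ T ∧ (∀ v, 0 < r v) ∧
    ∀ (f : ↥(SRing K E M N)), ∀ q ∈ MixedPolydisc K M N,
      evalPS K ((φ f : ↥(SRing K E M N)) : MvPowerSeries (Vars M N) K) q =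
        evalPS K ((f : ↥(SRing K E M N)) : MvPowerSeries (Vars M N) K)
          (fun v => if v ∈ T ∧ Sum.isLeft v = Sum.isLeft j ∧ varIdx v < varIdx j
            then q v + q j ^ r v else q v)

/-- `φ` is a (composite) Weierstrass change of variables, each elementary move taking
place among one of the groups of variables listed in `Ts` (so the sorts of variables are
changed separately). -/
inductive IsWChange {M N : ℕ} (E : Subring K) (Ts : Set (Set (Vars M N))) :
    (↥(SRing K E M N) ≃ₐ[K] ↥(SRing K E M N)) → Prop
  | refl : IsWChange E Ts AlgEquiv.refl
  | step {φ ψ : ↥(SRing K E M N) ≃ₐ[K] ↥(SRing K E M N)} (T : Set (Vars M N)) :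
      T ∈ Ts → IsElemWMove K E T φ → IsWChange E Ts ψ → IsWChange E Ts (φ.trans ψ)


---- part 5 ----

/-- "`A ⊆ R/J` is a finite inclusion", finiteness part: `R/J` is generated as a module
over (the image of) `A` by finitely many elements. -/
def FiniteOver {R : Type} [CommRing R] (A : Set R) (J : Ideal R) : Prop :=
  ∃ (k : ℕ) (c : Fin k → R), ∀ z : R, ∃ a : Fin k → R,
    (∀ i, a i ∈ A) ∧ z - ∑ i, a i * c i ∈ J

/-- "`A ⊆ R/J` is a finite inclusion", injectivity part: `A` meets `J` trivially. -/
def InjOver {R : Type} [CommRing R] (A : Set R) (J : Ideal R) : Prop :=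
  ∀ x ∈ A, x ∈ J → x = 0

/-- The parameter variables: the first `m₀` of the base `x`-variables, the first `n₀` of
the base `ρ`-variables, and the adjoined variables marked as parameters by `pv`. -/
def paramVars (m₀ n₀ : ℕ) {m n s t : ℕ} (pv : Set (Vars s t)) :
    Set (Vars (m + s) (n + t)) :=
  {v | (∃ i : Fin m, v = inclVars (Sum.inl i) ∧ (i : ℕ) < m₀) ∨
       (∃ j : Fin n, v = inclVars (Sum.inr j) ∧ (j : ℕ) < n₀) ∨
       ∃ w ∈ pv, v = newVars w}

/-- The group of all `x`-type variables (base parameter `x`-variables together with the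
adjoined parameter variables of `x`-sort). -/
def xGroup (m₀ : ℕ) {m n s t : ℕ} (pv : Set (Vars s t)) : Set (Vars (m + s) (n + t)) :=
  {v | (∃ i : Fin m, v = inclVars (Sum.inl i) ∧ (i : ℕ) < m₀) ∨
       ∃ w ∈ pv, (∃ i : Fin s, w = Sum.inl i) ∧ v = newVars w}

/-- The group of all `y`-type variables. -/
def yGroup (m₀ : ℕ) {m n s t : ℕ} (pv : Set (Vars s t)) : Set (Vars (m + s) (n + t)) :=
  {v | (∃ i : Fin m, v = inclVars (Sum.inl i) ∧ m₀ ≤ (i : ℕ)) ∨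
       ∃ w ∈ {w | w ∉ pv}, (∃ i : Fin s, w = Sum.inl i) ∧ v = newVars w}

/-- The group of all `ρ`-type variables. -/
def rhoGroup (n₀ : ℕ) {m n s t : ℕ} (pv : Set (Vars s t)) : Set (Vars (m + s) (n + t)) :=
  {v | (∃ j : Fin n, v = inclVars (Sum.inr j) ∧ (j : ℕ) < n₀) ∨
       ∃ w ∈ pv, (∃ j : Fin t, w = Sum.inr j) ∧ v = newVars w}

/-- The group of all `λ`-type variables. -/
def lamGroup (n₀ : ℕ) {m n s t : ℕ} (pv : Set (Vars s t)) : Set (Vars (m + s) (n + t)) :=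
  {v | (∃ j : Fin n, v = inclVars (Sum.inr j) ∧ n₀ ≤ (j : ℕ)) ∨
       ∃ w ∈ {w | w ∉ pv}, (∃ j : Fin t, w = Sum.inr j) ∧ v = newVars w}

/-- The rank of a variable within a group of variables of the same sort. -/
def groupRank {M N : ℕ} (G : Set (Vars M N)) (v : Vars M N) : ℕ :=
  {w ∈ G | varIdx w < varIdx v}.ncard

/-- The first `k` variables of a group. -/
def firstOf {M N : ℕ} (G : Set (Vars M N)) (k : ℕ) : Set (Vars M N) :=
  {v ∈ G | groupRank G v < k}

variable {K}

/-- The presentation respects the parameter structure: the fractions defining the adjoined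
parameter variables (those marked by `pv`) are built up from parameter variables only. -/
def GenFracPres.RespectsParams {E : Subring K} {m n s t : ℕ}
    (P : GenFracPres K E m n s t) (m₀ n₀ : ℕ) (pv : Set (Vars s t)) : Prop :=
  ∀ v ∈ pv, SupportedOn K (P.num v) (paramVars m₀ n₀ pv) ∧
    SupportedOn K (P.den v) (paramVars m₀ n₀ pv)

end DSemi
/- ===================== Auxiliary development for the proof ===================== -/

namespace DSemi

variable {K : Type} [NontriviallyNormedField K]

/-- Decompose a variable of the enlarged variable set as an old or a new variable. -/
def splitVar {m n s t : ℕ} : Vars (m + s) (n + t) → Vars m n ⊕ Vars s t :=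
  Sum.elim
    (Fin.addCases (fun i => Sum.inl (Sum.inl i)) (fun i => Sum.inr (Sum.inl i)))
    (Fin.addCases (fun j => Sum.inl (Sum.inr j)) (fun j => Sum.inr (Sum.inr j)))

@[simp] lemma splitVar_inclVars {m n s t : ℕ} (w : Vars m n) :
    splitVar (inclVars (m := m) (n := n) (s := s) (t := t) w) = Sum.inl w := by
  cases w <;> simp [splitVar, inclVars]

@[simp] lemma splitVar_newVars {m n s t : ℕ} (v : Vars s t) :
    splitVar (newVars (m := m) (n := n) v) = Sum.inr v := by
  cases v <;> simp [splitVar, newVars]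

lemma splitVar_cases {m n s t : ℕ} (u : Vars (m + s) (n + t)) :
    (∃ w, u = inclVars w) ∨ (∃ v, u = newVars v) := by
  cases u with
  | inl i =>
    refine Fin.addCases (motive := fun i : Fin (m + s) =>
      (∃ w, (Sum.inl i : Vars (m + s) (n + t)) = inclVars w) ∨
        (∃ v, (Sum.inl i : Vars (m + s) (n + t)) = newVars v)) ?_ ?_ i
    · exact fun i => Or.inl ⟨Sum.inl i, rfl⟩
    · exact fun i => Or.inr ⟨Sum.inl i, rfl⟩
  | inr j =>
    refine Fin.addCases (motive := fun j : Fin (n + t) =>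
      (∃ w, (Sum.inr j : Vars (m + s) (n + t)) = inclVars w) ∨
        (∃ v, (Sum.inr j : Vars (m + s) (n + t)) = newVars v)) ?_ ?_ j
    · exact fun j => Or.inl ⟨Sum.inr j, rfl⟩
    · exact fun j => Or.inr ⟨Sum.inr j, rfl⟩

lemma SupportedOn.mono {σ : Type} {f : MvPowerSeries σ K} {S T : Set σ}
    (hf : SupportedOn K f S) (hST : S ⊆ T) : SupportedOn K f T :=
  fun d hd => (hf d hd).trans hST

lemma evalPS_congr {σ : Type} {f : MvPowerSeries σ K} {S : Set σ}
    (hf : SupportedOn K f S) {q q' : σ → K} (h : ∀ v ∈ S, q v = q' v) :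
    evalPS K f q = evalPS K f q' := by
  refine tsum_congr fun d => ?_
  by_cases hc : MvPowerSeries.coeff d f = 0
  · simp [hc]
  · refine congrArg _ (Finsupp.prod_congr fun i hi => ?_)
    rw [h i (hf d hc hi)]

lemma polydisc_norm_le_one {M N : ℕ} {q : Vars M N → K} (hq : q ∈ MixedPolydisc K M N) :
    ∀ u, ‖q u‖ ≤ 1 := by
  intro u
  cases u with
  | inl i => exact hq.1 i
  | inr j => exact (hq.2 j).le

lemma norm_finsuppProd_le_one {σ : Type} {q : σ → K} (hq : ∀ u, ‖q u‖ ≤ 1) (d : σ →₀ ℕ) :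
    ‖d.prod fun i k => q i ^ k‖ ≤ 1 := by
  rw [Finsupp.prod, norm_prod]
  refine Finset.prod_le_one (fun i _ => norm_nonneg _) (fun i _ => ?_)
  rw [norm_pow]
  exact pow_le_one₀ (norm_nonneg _) (hq i)


section Ultra

variable (hna : IsNonarchimedean (norm : K → ℝ))
include hna

lemma norm_eq_of_sub_lt {x y : K} (h : ‖y - x‖ < ‖x‖) : ‖y‖ = ‖x‖ := by
  have e1 : y - x + x = y := by ring
  have h1 : ‖y‖ ≤ ‖x‖ := by
    have := hna (y - x) x
    rw [e1] at this
    exact this.trans (max_le h.le le_rfl)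
  have e2 : y + (x - y) = x := by ring
  have h2 : ‖x‖ ≤ ‖y‖ := by
    have hx : ‖x - y‖ < ‖x‖ := by rwa [← norm_neg, neg_sub] at h
    have := hna y (x - y)
    rw [e2] at this
    rcases max_cases ‖y‖ ‖x - y‖ with ⟨he, _⟩ | ⟨he, _⟩
    · rw [he] at this; exact this
    · rw [he] at this; exact absurd (lt_of_le_of_lt this hx) (lt_irrefl _)
  exact le_antisymm h1 h2

lemma norm_pow_sub_pow {a b : K} (ha : ‖a‖ ≤ 1) (hb : ‖b‖ ≤ 1) (k : ℕ) :
    ‖a ^ k - b ^ k‖ ≤ ‖a - b‖ := by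
  induction k with
  | zero => simp
  | succ k ih =>
    have key : a ^ (k + 1) - b ^ (k + 1) = a * (a ^ k - b ^ k) + (a - b) * b ^ k := by ring
    rw [key]
    refine (hna _ _).trans (max_le ?_ ?_)
    · rw [norm_mul]
      calc ‖a‖ * ‖a ^ k - b ^ k‖ ≤ 1 * ‖a - b‖ :=
        mul_le_mul ha ih (norm_nonneg _) zero_le_one
      _ = ‖a - b‖ := one_mul _
    · rw [norm_mul]
      calc ‖a - b‖ * ‖b ^ k‖ ≤ ‖a - b‖ * 1 := by
            refine mul_le_mul_of_nonneg_left ?_ (norm_nonneg _)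
            rw [norm_pow]; exact pow_le_one₀ (norm_nonneg _) hb
      _ = ‖a - b‖ := mul_one _

lemma norm_prod_sub_prod {ι : Type} (s : Finset ι) (x y : ι → K) {η : ℝ} (hη : 0 ≤ η)
    (hx : ∀ i ∈ s, ‖x i‖ ≤ 1) (hy : ∀ i ∈ s, ‖y i‖ ≤ 1)
    (hc : ∀ i ∈ s, ‖x i - y i‖ ≤ η) :
    ‖∏ i ∈ s, x i - ∏ i ∈ s, y i‖ ≤ η := by
  classical
  induction s using Finset.induction_on with
  | empty => simpa using hη
  | @insert a s ha ih =>
    rw [Finset.prod_insert ha, Finset.prod_insert ha]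
    have key : x a * ∏ i ∈ s, x i - y a * ∏ i ∈ s, y i =
        x a * (∏ i ∈ s, x i - ∏ i ∈ s, y i) + (x a - y a) * ∏ i ∈ s, y i := by ring
    rw [key]
    refine (hna _ _).trans (max_le ?_ ?_)
    · rw [norm_mul]
      calc ‖x a‖ * ‖∏ i ∈ s, x i - ∏ i ∈ s, y i‖ ≤ 1 * η := by
            refine mul_le_mul (hx a (Finset.mem_insert_self a s))
              (ih (fun i hi => hx i (Finset.mem_insert_of_mem hi))
                (fun i hi => hy i (Finset.mem_insert_of_mem hi))
                (fun i hi => hc i (Finset.mem_insert_of_mem hi)))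
              (norm_nonneg _) zero_le_one
      _ = η := one_mul _
    · rw [norm_mul]
      calc ‖x a - y a‖ * ‖∏ i ∈ s, y i‖ ≤ η * 1 := by
            refine mul_le_mul (hc a (Finset.mem_insert_self a s)) ?_ (norm_nonneg _) hη
            rw [norm_prod]
            exact Finset.prod_le_one (fun i _ => norm_nonneg _)
              (fun i hi => hy i (Finset.mem_insert_of_mem hi))
      _ = η := mul_one _

/-- The closed unit ball of a nonarchimedean field is a subring. -/
def unitBallSubring : Subring K where
  carrier := {x | ‖x‖ ≤ 1}
  one_mem' := by simp
  zero_mem' := by simp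
  add_mem' := fun {a b} ha hb => (hna a b).trans (max_le ha hb)
  mul_mem' := fun {a b} ha hb => by
    have : ‖a * b‖ = ‖a‖ * ‖b‖ := norm_mul a b
    rw [Set.mem_setOf_eq, this]
    exact mul_le_one₀ ha (norm_nonneg b) hb
  neg_mem' := fun {a} ha => by simpa using ha

lemma ringB_norm_le {E : Subring K} (hE : ∀ x ∈ E, ‖x‖ ≤ 1) {a : ℕ → K}
    (ha : ∀ i, ‖a i‖ ≤ 1) {b : K} (hb : b ∈ ringB K E a) : ‖b‖ ≤ 1 := by
  have h1 : genSubring K E a ≤ unitBallSubring hna := by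
    refine Subring.closure_le.mpr ?_
    rintro x (hx | ⟨i, rfl⟩)
    · exact hE x hx
    · exact ha i
  have h2 : locSubring K E a ≤ unitBallSubring hna := by
    rintro x ⟨b', hb', s', hs', hsn, hxs⟩
    have hx : ‖x‖ = ‖b'‖ := by
      have : ‖x * s'‖ = ‖x‖ * ‖s'‖ := norm_mul x s'
      rw [hxs, hsn, mul_one] at this
      exact this.symm
    show ‖x‖ ≤ 1
    rw [hx]
    exact h1 hb'
  have hcl : IsClosed ((unitBallSubring hna : Subring K) : Set K) :=
    isClosed_le continuous_norm continuous_const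
  exact Subring.topologicalClosure_minimal _ h2 hcl hb

lemma sep_coeff_norm_le {E : Subring K} (hE : ∀ x ∈ E, ‖x‖ ≤ 1) {σ : Type}
    {f : MvPowerSeries σ K} {c : K} {a : ℕ → K} (hz : IsZeroSeq K a)
    (hco : ∀ d : σ →₀ ℕ, ∃ b ∈ ringB K E a, MvPowerSeries.coeff d f = c * b) :
    ∀ d, ‖MvPowerSeries.coeff d f‖ ≤ ‖c‖ := by
  intro d
  obtain ⟨b, hb, hcb⟩ := hco d
  rw [hcb, norm_mul]
  calc ‖c‖ * ‖b‖ ≤ ‖c‖ * 1 :=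
    mul_le_mul_of_nonneg_left (ringB_norm_le hna hE hz.1 hb) (norm_nonneg _)
  _ = ‖c‖ := mul_one _

end Ultra


lemma norm_finsuppProd_le_pow {M N : ℕ} {q : Vars M N → K} (hq1 : ∀ u, ‖q u‖ ≤ 1)
    {r : ℝ} (hr0 : 0 ≤ r) (hr : ∀ j : Fin N, ‖q (Sum.inr j)‖ ≤ r) (d : Vars M N →₀ ℕ) :
    ‖d.prod fun i k => q i ^ k‖ ≤ r ^ (∑ i ∈ d.support, if i.isRight then d i else 0) := by
  classical
  rw [Finsupp.prod, norm_prod, ← Finset.prod_pow_eq_pow_sum]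
  refine Finset.prod_le_prod (fun i _ => norm_nonneg _) (fun i _ => ?_)
  rw [norm_pow]
  cases i with
  | inl i =>
    simp only [Sum.isRight_inl, if_false, pow_zero]
    exact pow_le_one₀ (norm_nonneg _) (hq1 _)
  | inr j =>
    simp only [Sum.isRight_inr, if_true]
    exact pow_le_pow_left₀ (norm_nonneg _) (hr j) _

section Analytic

variable (hna : IsNonarchimedean (norm : K → ℝ)) [CompleteSpace K]
include hna

lemma summable_eval {E : Subring K} (hE : ∀ x ∈ E, ‖x‖ ≤ 1)
    {M N : ℕ} {f : MvPowerSeries (Vars M N) K} (hf : IsSepSeries K E f)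
    {q : Vars M N → K} (hq : q ∈ MixedPolydisc K M N) :
    Summable fun d : Vars M N →₀ ℕ =>
      MvPowerSeries.coeff d f * d.prod fun i k => q i ^ k := by
  haveI := IsUltrametricDist.isUltrametricDist_of_isNonarchimedean_norm hna
  obtain ⟨c, a, hz, hco, hcof⟩ := hf
  have hcb := sep_coeff_norm_le hna hE hz hco
  refine NonarchimedeanAddGroup.summable_of_tendsto_cofinite_zero ?_
  rw [Metric.tendsto_nhds]
  intro ε hε
  rw [Filter.eventually_cofinite]
  have hq1 := polydisc_norm_le_one hq
  set r : NNReal := Finset.univ.sup (fun j : Fin N => ‖q (Sum.inr j)‖₊) with hrdef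
  have hr1 : (r : ℝ) < 1 := by
    have : r < 1 := by
      rw [hrdef, Finset.sup_lt_iff (by norm_num : (⊥ : NNReal) < 1)]
      intro j _
      have := hq.2 j
      rw [← coe_nnnorm] at this
      exact_mod_cast this
    exact_mod_cast this
  have hr0 : (0 : ℝ) ≤ (r : ℝ) := r.coe_nonneg
  have hqr : ∀ j : Fin N, ‖q (Sum.inr j)‖ ≤ (r : ℝ) := by
    intro j
    have := Finset.le_sup (f := fun j : Fin N => ‖q (Sum.inr j)‖₊) (Finset.mem_univ j)
    rw [← coe_nnnorm]
    exact_mod_cast this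
  obtain ⟨D₀, hD₀⟩ : ∃ D₀ : ℕ, ‖c‖ * (r : ℝ) ^ D₀ < ε := by
    have h0 : Filter.Tendsto (fun k : ℕ => ‖c‖ * (r : ℝ) ^ k) Filter.atTop (nhds 0) := by
      simpa using (tendsto_pow_atTop_nhds_zero_of_lt_one hr0 hr1).const_mul ‖c‖
    exact (h0.eventually_lt_const hε).exists
  set T : Set (Vars M N →₀ ℕ) :=
    {d | ε ≤ ‖MvPowerSeries.coeff d f‖ ∧ ∀ j : Fin N, d (Sum.inr j) < D₀} with hTdef
  have hTfin : T.Finite := by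
    set e := (Finsupp.sumFinsuppEquivProdFinsupp :
      (Fin M ⊕ Fin N →₀ ℕ) ≃ (Fin M →₀ ℕ) × (Fin N →₀ ℕ)) with hedef
    have hSρ : {dρ : Fin N →₀ ℕ | ∀ j, dρ j < D₀}.Finite := by
      have heq : {dρ : Fin N →₀ ℕ | ∀ j, dρ j < D₀} =
          ⇑Finsupp.equivFunOnFinite ⁻¹' (Set.univ.pi fun _ : Fin N => Set.Iio D₀) := by
        ext dρ
        simp [Set.mem_pi, Finsupp.equivFunOnFinite]
      rw [heq]
      exact Set.Finite.preimage (Equiv.injective _).injOn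
        (Set.Finite.pi fun _ => Set.finite_Iio _)
    have hBx : ∀ dρ : Fin N →₀ ℕ,
        {dx : Fin M →₀ ℕ | ε ≤ ‖MvPowerSeries.coeff (Finsupp.sumElim dx dρ) f‖}.Finite := by
      intro dρ
      have h1 := Metric.tendsto_nhds.mp (hcof dρ) ε hε
      rw [Filter.eventually_cofinite] at h1
      refine h1.subset fun dx hdx => ?_
      simp only [Set.mem_setOf_eq, dist_zero_right, not_lt]
      exact hdx
    have hU : (⋃ dρ ∈ {dρ : Fin N →₀ ℕ | ∀ j, dρ j < D₀},
        ({dx | ε ≤ ‖MvPowerSeries.coeff (Finsupp.sumElim dx dρ) f‖} ×ˢ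
          ({dρ} : Set (Fin N →₀ ℕ)))).Finite :=
      Set.Finite.biUnion hSρ fun dρ _ => (hBx dρ).prod (Set.finite_singleton _)
    refine (hU.preimage (e.injective.injOn)).subset ?_
    intro d hd
    have hd2 : ∀ j, (e d).2 j = d (Sum.inr j) := fun j =>
      Finsupp.snd_sumFinsuppEquivProdFinsupp d j
    have hdeq : Finsupp.sumElim (e d).1 (e d).2 = d := e.symm_apply_apply d
    simp only [Set.mem_preimage, Set.mem_iUnion]
    refine ⟨(e d).2, fun j => by rw [hd2 j]; exact hd.2 j, ?_, rfl⟩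
    show ε ≤ ‖MvPowerSeries.coeff (Finsupp.sumElim (e d).1 (e d).2) f‖
    rw [hdeq]
    exact hd.1
  refine hTfin.subset ?_
  intro d hd
  simp only [Set.mem_setOf_eq, dist_zero_right, not_lt, norm_mul] at hd
  constructor
  · calc ε ≤ ‖MvPowerSeries.coeff d f‖ * ‖d.prod fun i k => q i ^ k‖ := hd
      _ ≤ ‖MvPowerSeries.coeff d f‖ * 1 :=
        mul_le_mul_of_nonneg_left (norm_finsuppProd_le_one hq1 d) (norm_nonneg _)
      _ = _ := mul_one _
  · have h1 : ε ≤ ‖c‖ * (r : ℝ) ^ (∑ i ∈ d.support, if i.isRight then d i else 0) :=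
      hd.trans (mul_le_mul (hcb d) (norm_finsuppProd_le_pow hq1 hr0 hqr d)
        (norm_nonneg _) (norm_nonneg c))
    have h2 : (∑ i ∈ d.support, if i.isRight then d i else 0) < D₀ := by
      by_contra hcon
      push_neg at hcon
      have : ‖c‖ * (r : ℝ) ^ (∑ i ∈ d.support, if i.isRight then d i else 0) ≤
          ‖c‖ * (r : ℝ) ^ D₀ :=
        mul_le_mul_of_nonneg_left (pow_le_pow_of_le_one hr0 hr1.le hcon) (norm_nonneg c)
      linarith
    intro j
    refine lt_of_le_of_lt ?_ h2
    by_cases hj : d (Sum.inr j) = 0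
    · simp [hj]
    · have hmem : (Sum.inr j : Vars M N) ∈ d.support := Finsupp.mem_support_iff.mpr hj
      have hle := Finset.single_le_sum (f := fun i : Vars M N => if i.isRight then d i else 0)
        (fun i _ => by positivity) hmem
      simpa using hle

lemma evalPS_sub_le {E : Subring K} (hE : ∀ x ∈ E, ‖x‖ ≤ 1) {M N : ℕ}
    {f : MvPowerSeries (Vars M N) K} {S : Set (Vars M N)}
    (hf : IsSepSeries K E f) (hS : SupportedOn K f S) :
    ∃ C : ℝ, 0 ≤ C ∧ ∀ (q q' : Vars M N → K) (η : ℝ), 0 ≤ η →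
      q ∈ MixedPolydisc K M N → q' ∈ MixedPolydisc K M N →
      (∀ v ∈ S, ‖q v - q' v‖ ≤ η) →
      ‖evalPS K f q - evalPS K f q'‖ ≤ C * η := by
  haveI := IsUltrametricDist.isUltrametricDist_of_isNonarchimedean_norm hna
  obtain ⟨c, a, hz, hco, hcof⟩ := hf
  have hcb := sep_coeff_norm_le hna hE hz hco
  refine ⟨‖c‖, norm_nonneg c, fun q q' η hη hq hq' hqq' => ?_⟩
  have hsq := summable_eval hna hE ⟨c, a, hz, hco, hcof⟩ hq
  have hsq' := summable_eval hna hE ⟨c, a, hz, hco, hcof⟩ hq'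
  rw [evalPS, evalPS, ← Summable.tsum_sub hsq hsq']
  refine IsUltrametricDist.norm_tsum_le_of_forall_le_of_nonneg
    (mul_nonneg (norm_nonneg c) hη) fun d => ?_
  by_cases hc0 : MvPowerSeries.coeff d f = 0
  · simp only [hc0, zero_mul, sub_zero, norm_zero]
    positivity
  · rw [← mul_sub, norm_mul]
    refine mul_le_mul (hcb d) ?_ (norm_nonneg _) (norm_nonneg c)
    rw [Finsupp.prod, Finsupp.prod]
    refine norm_prod_sub_prod hna d.support _ _ hη ?_ ?_ ?_
    · intro i _
      rw [norm_pow]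
      exact pow_le_one₀ (norm_nonneg _) (polydisc_norm_le_one hq i)
    · intro i _
      rw [norm_pow]
      exact pow_le_one₀ (norm_nonneg _) (polydisc_norm_le_one hq' i)
    · intro i hi
      refine (norm_pow_sub_pow hna (polydisc_norm_le_one hq i)
        (polydisc_norm_le_one hq' i) (d i)).trans (hqq' i (hS d hc0 hi))

end Analytic


lemma div_close (hna : IsNonarchimedean (norm : K → ℝ)) {a b a₀ b₀ : K} {δ Ca Cb : ℝ}
    (hβ : 0 < ‖b₀‖) (ha : ‖a - a₀‖ ≤ Ca) (hb : ‖b - b₀‖ ≤ Cb) (hCb : Cb < ‖b₀‖)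
    (hmax : max (Ca * ‖b₀‖) (‖a₀‖ * Cb) < δ * (‖b₀‖ * ‖b₀‖)) :
    ‖a / b - a₀ / b₀‖ < δ := by
  have hb₀ : b₀ ≠ 0 := by
    intro h
    rw [h, norm_zero] at hβ
    exact lt_irrefl _ hβ
  have hbn : ‖b‖ = ‖b₀‖ := norm_eq_of_sub_lt hna (lt_of_le_of_lt hb hCb)
  have hbne : b ≠ 0 := by
    intro h
    rw [h, norm_zero] at hbn
    exact hb₀ (norm_eq_zero.mp hbn.symm)
  have key : a / b - a₀ / b₀ = (a - a₀) * b₀ / (b * b₀) + a₀ * (b₀ - b) / (b * b₀) := by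
    field_simp
    ring
  rw [key]
  refine lt_of_le_of_lt (hna _ _) (max_lt ?_ ?_)
  · rw [norm_div, norm_mul, norm_mul, hbn]
    rw [div_lt_iff₀ (by positivity)]
    calc ‖a - a₀‖ * ‖b₀‖ ≤ Ca * ‖b₀‖ := mul_le_mul_of_nonneg_right ha hβ.le
      _ ≤ max (Ca * ‖b₀‖) (‖a₀‖ * Cb) := le_max_left _ _
      _ < δ * (‖b₀‖ * ‖b₀‖) := hmax
  · rw [norm_div, norm_mul, norm_mul, hbn]
    rw [div_lt_iff₀ (by positivity)]
    calc ‖a₀‖ * ‖b₀ - b‖ ≤ ‖a₀‖ * Cb := by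
          refine mul_le_mul_of_nonneg_left ?_ (norm_nonneg _)
          rwa [← norm_neg, neg_sub]
      _ ≤ max (Ca * ‖b₀‖) (‖a₀‖ * Cb) := le_max_right _ _
      _ < δ * (‖b₀‖ * ‖b₀‖) := hmax

lemma exists_eta {A B : ℝ} (hA : 0 ≤ A) (hB : 0 < B) : ∃ η : ℝ, 0 < η ∧ A * η < B := by
  refine ⟨B / (2 * (A + 1)), by positivity, ?_⟩
  rw [mul_div_assoc', div_lt_iff₀ (by positivity)]
  nlinarith [mul_pos hB (show (0:ℝ) < A + 2 by linarith)]

lemma exists_pos_le_forall {ι : Type} [Fintype ι] (f : ι → ℝ) (hf : ∀ i, 0 < f i) :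
    ∃ c : ℝ, 0 < c ∧ c ≤ 1 ∧ ∀ i, c ≤ f i := by
  rcases isEmpty_or_nonempty ι with h | h
  · exact ⟨1, one_pos, le_refl 1, fun i => (h.false i).elim⟩
  · refine ⟨min 1 (Finset.univ.inf' Finset.univ_nonempty f), ?_, min_le_left _ _, fun i => ?_⟩
    · refine lt_min one_pos ?_
      rw [Finset.lt_inf'_iff]
      exact fun i _ => hf i
    · exact (min_le_right _ _).trans (Finset.inf'_le _ (Finset.mem_univ i))


namespace GenFracPres

variable {E : Subring K} {m n s t : ℕ}

lemma lift_injOn (P : GenFracPres K E m n s t) : Set.InjOn P.proj P.lift := by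
  intro q hq q' hq' hproj
  have hbase : ∀ w : Vars m n, q (inclVars w) = q' (inclVars w) := fun w => congrFun hproj w
  have key : ∀ k : ℕ, ∀ v : Vars s t, P.stage v < k → q (newVars v) = q' (newVars v) := by
    intro k
    induction k with
    | zero => exact fun v hv => absurd hv (Nat.not_lt_zero _)
    | succ k ih =>
      intro v hv
      have hagree : ∀ u ∈ (Set.range (inclVars (m := m) (n := n) (s := s) (t := t)) ∪
          newVars '' {w | P.stage w < P.stage v}), q u = q' u := by
        rintro u (⟨w, rfl⟩ | ⟨w, hw, rfl⟩)
        · exact hbase w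
        · exact ih w (lt_of_lt_of_le hw (Nat.lt_succ_iff.mp hv))
      have hnum : evalPS K (P.num v) q = evalPS K (P.num v) q' :=
        evalPS_congr (P.num_dep v) hagree
      have hden : evalPS K (P.den v) q = evalPS K (P.den v) q' :=
        evalPS_congr (P.den_dep v) hagree
      have h1 := (hq.2 v).1
      have h2 := (hq'.2 v).1
      have hd := (hq.2 v).2
      rw [hnum, hden] at h1
      rw [← h2] at h1
      rw [hden] at hd
      exact mul_left_cancel₀ hd h1
  funext u
  rcases splitVar_cases u with ⟨w, rfl⟩ | ⟨v, rfl⟩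
  · exact hbase w
  · exact key (P.stage v + 1) v (Nat.lt_succ_self _)

/-- Iterated construction of the section of the projection over a base point `p`. -/
def approx (P : GenFracPres K E m n s t) (p : Vars m n → K) :
    ℕ → Vars (m + s) (n + t) → K
  | 0 => fun u => (splitVar u).elim p fun _ => 0
  | k + 1 => fun u => (splitVar u).elim p fun v =>
      if P.stage v ≤ k then
        evalPS K (P.num v) (P.approx p k) / evalPS K (P.den v) (P.approx p k)
      else 0

variable (P : GenFracPres K E m n s t) (p : Vars m n → K)

@[simp] lemma approx_incl (k : ℕ) (w : Vars m n) : P.approx p k (inclVars w) = p w := by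
  cases k <;> simp [approx]

lemma approx_succ_new (k : ℕ) (v : Vars s t) :
    P.approx p (k + 1) (newVars v) =
      if P.stage v ≤ k then
        evalPS K (P.num v) (P.approx p k) / evalPS K (P.den v) (P.approx p k)
      else 0 := by
  simp [approx]

lemma approx_new_eq_zero {k : ℕ} {v : Vars s t} (h : ¬ P.stage v < k) :
    P.approx p k (newVars v) = 0 := by
  cases k with
  | zero => simp [approx]
  | succ k =>
    rw [approx_succ_new, if_neg]
    intro hc
    exact h (Nat.lt_succ_of_le hc)

/-- The variables whose value is already determined at stage `k`. -/
def GoodC (P : GenFracPres K E m n s t) (k : ℕ) : Set (Vars (m + s) (n + t)) :=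
  Set.range inclVars ∪ newVars '' {v | P.stage v < k}

lemma goodC_mono {k k' : ℕ} (h : k ≤ k') : P.GoodC k ⊆ P.GoodC k' := by
  rintro u (⟨w, rfl⟩ | ⟨v, hv, rfl⟩)
  · exact Or.inl ⟨w, rfl⟩
  · exact Or.inr ⟨v, lt_of_lt_of_le hv h, rfl⟩

lemma dep_subset_goodC {v : Vars s t} {k : ℕ} (h : P.stage v ≤ k) :
    (Set.range (inclVars (m := m) (n := n) (s := s) (t := t)) ∪
      newVars '' {w | P.stage w < P.stage v}) ⊆ P.GoodC k := by
  rintro u (⟨w, rfl⟩ | ⟨w, hw, rfl⟩)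
  · exact Or.inl ⟨w, rfl⟩
  · exact Or.inr ⟨w, lt_of_lt_of_le hw h, rfl⟩

lemma approx_stable : ∀ k : ℕ, ∀ u ∈ P.GoodC k, P.approx p (k + 1) u = P.approx p k u := by
  intro k
  induction k with
  | zero =>
    rintro u (⟨w, rfl⟩ | ⟨v, hv, rfl⟩)
    · simp
    · exact absurd hv (Nat.not_lt_zero _)
  | succ k ih =>
    rintro u (⟨w, rfl⟩ | ⟨v, hv, rfl⟩)
    · simp
    · have hsv : P.stage v ≤ k := Nat.lt_succ_iff.mp hv
      rw [approx_succ_new, approx_succ_new, if_pos (hsv.trans (Nat.le_succ k)), if_pos hsv]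
      have hagree : ∀ u ∈ (Set.range (inclVars (m := m) (n := n) (s := s) (t := t)) ∪
          newVars '' {w | P.stage w < P.stage v}), P.approx p (k + 1) u = P.approx p k u :=
        fun u hu => ih u (P.dep_subset_goodC hsv hu)
      rw [evalPS_congr (P.num_dep v) hagree, evalPS_congr (P.den_dep v) hagree]

lemma approx_agree {k k' : ℕ} (h : k ≤ k') : ∀ u ∈ P.GoodC k, P.approx p k' u = P.approx p k u := by
  induction k', h using Nat.le_induction with
  | base => exact fun u _ => rfl
  | succ k' hk ih =>
    intro u hu
    rw [P.approx_stable p k' u (P.goodC_mono hk hu)]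
    exact ih u hu

end GenFracPres


namespace GenFracPres

variable {E : Subring K} {m n s t : ℕ}

lemma approx_mem_polydisc (hna : IsNonarchimedean (norm : K → ℝ))
    (P : GenFracPres K E m n s t) {p : Vars m n → K} {k : ℕ}
    {q₀ : Vars (m + s) (n + t) → K} (hq₀ : q₀ ∈ MixedPolydisc K (m + s) (n + t))
    {δ : ℝ} (hδ1 : δ ≤ 1) (hδρ : ∀ j : Fin (n + t), δ ≤ 1 - ‖q₀ (Sum.inr j)‖)
    (h : ∀ u ∈ P.GoodC k, ‖P.approx p k u - q₀ u‖ < δ) :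
    P.approx p k ∈ MixedPolydisc K (m + s) (n + t) := by
  have hval : ∀ u : Vars (m + s) (n + t), P.approx p k u = 0 ∨ u ∈ P.GoodC k := by
    intro u
    rcases splitVar_cases u with ⟨w, rfl⟩ | ⟨v, rfl⟩
    · exact Or.inr (Or.inl ⟨w, rfl⟩)
    · by_cases hv : P.stage v < k
      · exact Or.inr (Or.inr ⟨v, hv, rfl⟩)
      · exact Or.inl (P.approx_new_eq_zero p hv)
  constructor
  · intro i
    rcases hval (Sum.inl i) with h0 | hg
    · rw [h0]; simp
    · have hlt := h _ hg
      have e1 : P.approx p k (Sum.inl i) =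
          (P.approx p k (Sum.inl i) - q₀ (Sum.inl i)) + q₀ (Sum.inl i) := by ring
      rw [e1]
      exact (hna _ _).trans (max_le (hlt.le.trans hδ1) (hq₀.1 i))
  · intro j
    rcases hval (Sum.inr j) with h0 | hg
    · rw [h0]; simp
    · have hlt := h _ hg
      have e1 : P.approx p k (Sum.inr j) =
          (P.approx p k (Sum.inr j) - q₀ (Sum.inr j)) + q₀ (Sum.inr j) := by ring
      rw [e1]
      refine lt_of_le_of_lt (hna _ _) (max_lt ?_ (hq₀.2 j))
      have h2 := hδρ j
      have h3 := norm_nonneg (q₀ (Sum.inr j))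
      linarith

lemma approx_close (hna : IsNonarchimedean (norm : K → ℝ)) [CompleteSpace K]
    (hE : ∀ x ∈ E, ‖x‖ ≤ 1) (P : GenFracPres K E m n s t)
    {q₀ : Vars (m + s) (n + t) → K} (hq₀ : q₀ ∈ P.lift)
    {δ₀ : ℝ} (hδ₀pos : 0 < δ₀) (hδ₀1 : δ₀ ≤ 1)
    (hδ₀ρ : ∀ j : Fin (n + t), δ₀ ≤ 1 - ‖q₀ (Sum.inr j)‖) :
    ∀ k : ℕ, ∀ δ : ℝ, 0 < δ → ∃ ε : ℝ, 0 < ε ∧ ∀ p : Vars m n → K,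
      (∀ w, ‖p w - q₀ (inclVars w)‖ < ε) →
      ∀ u ∈ P.GoodC k, ‖P.approx p k u - q₀ u‖ < δ := by
  have hq₀poly : q₀ ∈ MixedPolydisc K (m + s) (n + t) := hq₀.1
  choose Cn hCn0 hCn using fun v : Vars s t =>
    evalPS_sub_le hna hE (P.num_sep v) (P.num_dep v)
  choose Cd hCd0 hCd using fun v : Vars s t =>
    evalPS_sub_le hna hE (P.den_sep v) (P.den_dep v)
  intro k
  induction k with
  | zero =>
    intro δ hδ
    refine ⟨δ, hδ, fun p hp u hu => ?_⟩
    rcases hu with ⟨w, rfl⟩ | ⟨v, hv, rfl⟩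
    · rw [P.approx_incl]
      exact hp w
    · exact absurd hv (Nat.not_lt_zero _)
  | succ k ih =>
    intro δ hδ
    set b₀ : Vars s t → K := fun v => evalPS K (P.den v) q₀ with hb₀def
    set a₀ : Vars s t → K := fun v => evalPS K (P.num v) q₀ with ha₀def
    have hb₀ : ∀ v, b₀ v ≠ 0 := fun v => (hq₀.2 v).2
    have hβ : ∀ v, 0 < ‖b₀ v‖ := fun v => norm_pos_iff.mpr (hb₀ v)
    have hq₀new : ∀ v, q₀ (newVars v) = a₀ v / b₀ v := by
      intro v
      rw [eq_div_iff (hb₀ v), mul_comm]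
      exact (hq₀.2 v).1
    have hηvex : ∀ v : Vars s t, ∃ η : ℝ, 0 < η ∧ Cd v * η < ‖b₀ v‖ ∧
        (Cn v * ‖b₀ v‖ + ‖a₀ v‖ * Cd v) * η < δ * (‖b₀ v‖ * ‖b₀ v‖) := by
      intro v
      obtain ⟨η₁, hη₁, hη₁'⟩ := exists_eta (hCd0 v) (hβ v)
      obtain ⟨η₂, hη₂, hη₂'⟩ := exists_eta (A := Cn v * ‖b₀ v‖ + ‖a₀ v‖ * Cd v)
        (add_nonneg (mul_nonneg (hCn0 v) (norm_nonneg _))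
          (mul_nonneg (norm_nonneg _) (hCd0 v)))
        (mul_pos hδ (mul_pos (hβ v) (hβ v)))
      refine ⟨min η₁ η₂, lt_min hη₁ hη₂, ?_, ?_⟩
      · exact lt_of_le_of_lt (mul_le_mul_of_nonneg_left (min_le_left _ _) (hCd0 v)) hη₁'
      · exact lt_of_le_of_lt (mul_le_mul_of_nonneg_left (min_le_right _ _)
          (add_nonneg (mul_nonneg (hCn0 v) (norm_nonneg _))
            (mul_nonneg (norm_nonneg _) (hCd0 v)))) hη₂'
    choose ηv hηv0 hηv1 hηv2 using hηvex
    obtain ⟨η, hη0, _, hηle⟩ := exists_pos_le_forall ηv hηv0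
    have hη'0 : 0 < min η (min δ δ₀) := lt_min hη0 (lt_min hδ hδ₀pos)
    obtain ⟨ε₁, hε₁0, hε₁⟩ := ih (min η (min δ δ₀)) hη'0
    refine ⟨min ε₁ (min η (min δ δ₀)), lt_min hε₁0 hη'0, fun p hp u hu => ?_⟩
    have hpε₁ : ∀ w, ‖p w - q₀ (inclVars w)‖ < ε₁ :=
      fun w => lt_of_lt_of_le (hp w) (min_le_left _ _)
    have hgood := hε₁ p hpε₁
    have hη'δ₀ : min η (min δ δ₀) ≤ δ₀ := (min_le_right _ _).trans (min_le_right _ _)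
    have hη'δ : min η (min δ δ₀) ≤ δ := (min_le_right _ _).trans (min_le_left _ _)
    have hη'η : min η (min δ δ₀) ≤ η := min_le_left _ _
    have hpoly : P.approx p k ∈ MixedPolydisc K (m + s) (n + t) :=
      P.approx_mem_polydisc hna hq₀poly (hη'δ₀.trans hδ₀1)
        (fun j => hη'δ₀.trans (hδ₀ρ j)) hgood
    rcases hu with ⟨w, rfl⟩ | ⟨v, hv, rfl⟩
    · rw [P.approx_incl]
      exact lt_of_lt_of_le (hp w) ((min_le_right _ _).trans hη'δ)
    · have hsv : P.stage v ≤ k := Nat.lt_succ_iff.mp hv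
      rw [P.approx_succ_new, if_pos hsv, hq₀new v]
      have hclose : ∀ u' ∈ (Set.range (inclVars (m := m) (n := n) (s := s) (t := t)) ∪
          newVars '' {w | P.stage w < P.stage v}),
          ‖P.approx p k u' - q₀ u'‖ ≤ min η (min δ δ₀) :=
        fun u' hu' => (hgood u' (P.dep_subset_goodC hsv hu')).le
      have hA : ‖evalPS K (P.num v) (P.approx p k) - a₀ v‖ ≤ Cn v * min η (min δ δ₀) :=
        hCn v (P.approx p k) q₀ _ hη'0.le hpoly hq₀poly hclose
      have hB : ‖evalPS K (P.den v) (P.approx p k) - b₀ v‖ ≤ Cd v * min η (min δ δ₀) :=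
        hCd v (P.approx p k) q₀ _ hη'0.le hpoly hq₀poly hclose
      have hη'v : min η (min δ δ₀) ≤ ηv v := hη'η.trans (hηle v)
      refine div_close hna (hβ v) hA hB ?_ ?_
      · calc Cd v * min η (min δ δ₀) ≤ Cd v * ηv v :=
            mul_le_mul_of_nonneg_left hη'v (hCd0 v)
          _ < ‖b₀ v‖ := hηv1 v
      · have hsum : (Cn v * ‖b₀ v‖ + ‖a₀ v‖ * Cd v) * min η (min δ δ₀) <
            δ * (‖b₀ v‖ * ‖b₀ v‖) :=
          lt_of_le_of_lt (mul_le_mul_of_nonneg_left hη'v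
            (add_nonneg (mul_nonneg (hCn0 v) (norm_nonneg _))
              (mul_nonneg (norm_nonneg _) (hCd0 v)))) (hηv2 v)
        have t1 : 0 ≤ ‖a₀ v‖ * Cd v * min η (min δ δ₀) :=
          mul_nonneg (mul_nonneg (norm_nonneg _) (hCd0 v)) hη'0.le
        have t2 : 0 ≤ Cn v * ‖b₀ v‖ * min η (min δ δ₀) :=
          mul_nonneg (mul_nonneg (hCn0 v) (norm_nonneg _)) hη'0.le
        refine max_lt ?_ ?_
        · nlinarith
        · nlinarith

lemma local_section (hna : IsNonarchimedean (norm : K → ℝ)) [CompleteSpace K]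
    (hE : ∀ x ∈ E, ‖x‖ ≤ 1) (P : GenFracPres K E m n s t)
    {q₀ : Vars (m + s) (n + t) → K} (hq₀ : q₀ ∈ P.lift) {δ : ℝ} (hδ : 0 < δ) :
    ∃ ε : ℝ, 0 < ε ∧ ∀ p : Vars m n → K, (∀ w, ‖p w - q₀ (inclVars w)‖ < ε) →
      ∃ q ∈ P.lift, P.proj q = p ∧ ∀ u, ‖q u - q₀ u‖ < δ := by
  have hq₀poly : q₀ ∈ MixedPolydisc K (m + s) (n + t) := hq₀.1
  obtain ⟨δ₀, hδ₀pos, hδ₀1, hδ₀ρ⟩ := exists_pos_le_forall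
    (fun j : Fin (n + t) => 1 - ‖q₀ (Sum.inr j)‖) (fun j => sub_pos.mpr (hq₀poly.2 j))
  choose Cd hCd0 hCd using fun v : Vars s t =>
    evalPS_sub_le hna hE (P.den_sep v) (P.den_dep v)
  set b₀ : Vars s t → K := fun v => evalPS K (P.den v) q₀ with hb₀def
  have hb₀ : ∀ v, b₀ v ≠ 0 := fun v => (hq₀.2 v).2
  have hβ : ∀ v, 0 < ‖b₀ v‖ := fun v => norm_pos_iff.mpr (hb₀ v)
  choose ηv hηv0 hηv1 using fun v : Vars s t => exists_eta (hCd0 v) (hβ v)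
  obtain ⟨η, hη0, _, hηle⟩ := exists_pos_le_forall ηv hηv0
  set δ' := min δ (min δ₀ η) with hδ'def
  have hδ'0 : 0 < δ' := lt_min hδ (lt_min hδ₀pos hη0)
  have hδ'δ : δ' ≤ δ := min_le_left _ _
  have hδ'δ₀ : δ' ≤ δ₀ := (min_le_right _ _).trans (min_le_left _ _)
  have hδ'η : δ' ≤ η := (min_le_right _ _).trans (min_le_right _ _)
  set KS := Finset.univ.sup P.stage with hKS
  have hstage : ∀ v : Vars s t, P.stage v ≤ KS := fun v => Finset.le_sup (Finset.mem_univ v)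
  have hallgood : ∀ u : Vars (m + s) (n + t), u ∈ P.GoodC (KS + 1) := by
    intro u
    rcases splitVar_cases u with ⟨w, rfl⟩ | ⟨v, rfl⟩
    · exact Or.inl ⟨w, rfl⟩
    · exact Or.inr ⟨v, Nat.lt_succ_of_le (hstage v), rfl⟩
  obtain ⟨ε, hε0, hε⟩ := P.approx_close hna hE hq₀ hδ₀pos hδ₀1 hδ₀ρ (KS + 1) δ' hδ'0
  refine ⟨ε, hε0, fun p hp => ?_⟩
  have hgood := hε p hp
  have hcoord : ∀ u, ‖P.approx p (KS + 1) u - q₀ u‖ < δ' := fun u => hgood u (hallgood u)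
  have hpoly : P.approx p (KS + 1) ∈ MixedPolydisc K (m + s) (n + t) :=
    P.approx_mem_polydisc hna hq₀poly (hδ'δ₀.trans hδ₀1)
      (fun j => hδ'δ₀.trans (hδ₀ρ j)) hgood
  refine ⟨P.approx p (KS + 1), ⟨hpoly, fun v => ?_⟩, ?_,
    fun u => lt_of_lt_of_le (hcoord u) hδ'δ⟩
  · -- the defining relations and nonvanishing of the denominators
    have hsv : P.stage v ≤ KS := hstage v
    have hagree : ∀ u ∈ (Set.range (inclVars (m := m) (n := n) (s := s) (t := t)) ∪
        newVars '' {w | P.stage w < P.stage v}),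
        P.approx p (KS + 1) u = P.approx p KS u :=
      fun u hu => P.approx_stable p KS u (P.dep_subset_goodC hsv hu)
    have hdeneq : evalPS K (P.den v) (P.approx p (KS + 1)) =
        evalPS K (P.den v) (P.approx p KS) := evalPS_congr (P.den_dep v) hagree
    have hnumeq : evalPS K (P.num v) (P.approx p (KS + 1)) =
        evalPS K (P.num v) (P.approx p KS) := evalPS_congr (P.num_dep v) hagree
    have hval : P.approx p (KS + 1) (newVars v) =
        evalPS K (P.num v) (P.approx p KS) / evalPS K (P.den v) (P.approx p KS) := by
      rw [P.approx_succ_new, if_pos hsv]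
    have hdenne : evalPS K (P.den v) (P.approx p (KS + 1)) ≠ 0 := by
      have hcl : ‖evalPS K (P.den v) (P.approx p (KS + 1)) - b₀ v‖ ≤ Cd v * δ' :=
        hCd v _ q₀ δ' hδ'0.le hpoly hq₀poly (fun u' _ => (hcoord u').le)
      have hlt : Cd v * δ' < ‖b₀ v‖ :=
        calc Cd v * δ' ≤ Cd v * ηv v :=
            mul_le_mul_of_nonneg_left (hδ'η.trans (hηle v)) (hCd0 v)
          _ < ‖b₀ v‖ := hηv1 v
      have hnn := norm_eq_of_sub_lt hna (lt_of_le_of_lt hcl hlt)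
      intro h0
      rw [h0, norm_zero] at hnn
      exact (hβ v).ne hnn
    refine ⟨?_, hdenne⟩
    rw [hval, hdeneq, hnumeq, mul_comm]
    refine div_mul_cancel₀ _ ?_
    rw [← hdeneq]
    exact hdenne
  · funext w
    exact P.approx_incl p (KS + 1) w

end GenFracPres

lemma evalPS_C_add_X {d : ℕ} (c₀ : K) (l : Fin d) (y : Fin d → K) :
    evalPS K (MvPowerSeries.C (σ := Fin d) (R := K) c₀ + MvPowerSeries.X l) y = c₀ + y l := by
  classical
  have hne : (Finsupp.single l 1 : Fin d →₀ ℕ) ≠ 0 :=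
    fun h => one_ne_zero (Finsupp.single_eq_zero.mp h)
  rw [evalPS]
  rw [tsum_eq_sum (s := ({0, Finsupp.single l 1} : Finset (Fin d →₀ ℕ)))
    (f := fun d' : Fin d →₀ ℕ =>
      MvPowerSeries.coeff d' (MvPowerSeries.C (σ := Fin d) (R := K) c₀ + MvPowerSeries.X l) *
        d'.prod fun i k => y i ^ k)]
  · rw [Finset.sum_insert (by simpa using hne.symm), Finset.sum_singleton]
    rw [map_add, map_add]
    rw [MvPowerSeries.coeff_zero_C]
    rw [MvPowerSeries.coeff_X, if_neg hne.symm]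
    rw [MvPowerSeries.coeff_C, if_neg hne]
    rw [MvPowerSeries.coeff_X, if_pos rfl]
    rw [Finsupp.prod_zero_index]
    rw [Finsupp.prod_single_index (by simp)]
    simp
  · intro d' hd'
    simp only [Finset.mem_insert, Finset.mem_singleton, not_or] at hd'
    rw [map_add, MvPowerSeries.coeff_C, if_neg hd'.1, MvPowerSeries.coeff_X,
      if_neg hd'.2, add_zero, zero_mul]

end DSemi


open DSemi in

/-- For a generalized ring of fractions `B = S_{m+s,n+t}/J` over `S_{m,n}`, the coordinate
projection maps the semianalytic set
`X = V(J)_K ∩ {∏ g_i · ∏ g′_j ≠ 0} ⊆ (K°)^{m+s} × (K°°)^{n+t}` bijectively onto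
`Dom_{m,n} B`, and if `X` is nonempty it is an `(m+n)`-dimensional `K`-analytic
manifold. -/
theorem lift_bijective_and_manifold
    {K : Type} [NontriviallyNormedField K] [CompleteSpace K]
    (hna : IsNonarchimedean (norm : K → ℝ))
    (E : Subring K) (hE : ∀ x ∈ E, ‖x‖ ≤ 1) (hEclosed : IsClosed (E : Set K))
    {m n s t : ℕ} (P : GenFracPres K E m n s t) :
    Set.BijOn P.proj P.lift P.Dom ∧
    (P.lift.Nonempty → IsKAnalyticManifold K P.lift (m + n)) := by
  classical
  have hinj : Set.InjOn P.proj P.lift := P.lift_injOn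
  constructor
  · exact hinj.bijOn_image
  · intro hne
    haveI : Nonempty ↥P.lift := hne.to_subtype
    set φ0 : ↥P.lift → Fin (m + n) → K :=
      fun x l => (x : Vars (m + s) (n + t) → K) (inclVars (finSumFinEquiv.symm l)) with hφ0
    have hφ0proj : ∀ (x : ↥P.lift) (w : Vars m n),
        (x : Vars (m + s) (n + t) → K) (inclVars w) = φ0 x (finSumFinEquiv w) := by
      intro x w
      rw [hφ0]
      simp
    have hφ0inj : Function.Injective φ0 := by
      intro x x' h
      have hproj : P.proj (x : Vars (m + s) (n + t) → K) =
          P.proj (x' : Vars (m + s) (n + t) → K) := by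
        funext w
        show (x : Vars (m + s) (n + t) → K) (inclVars w) =
          (x' : Vars (m + s) (n + t) → K) (inclVars w)
        rw [hφ0proj x w, hφ0proj x' w, h]
      exact Subtype.ext (hinj x.2 x'.2 hproj)
    have hball : ∀ (x₁ : ↥P.lift) (δ' : ℝ), 0 < δ' → ∃ ε : ℝ, 0 < ε ∧
        ∀ y : Fin (m + n) → K, dist y (φ0 x₁) < ε →
          ∃ x : ↥P.lift, φ0 x = y ∧ dist x x₁ < δ' := by
      intro x₁ δ' hδ'
      obtain ⟨ε, hε0, hε⟩ := P.local_section hna hE x₁.2 hδ'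
      refine ⟨ε, hε0, fun y hy => ?_⟩
      have hp : ∀ w, ‖(fun w => y (finSumFinEquiv w)) w - (x₁ : Vars (m + s) (n + t) → K) (inclVars w)‖ < ε := by
        intro w
        rw [hφ0proj x₁ w, ← dist_eq_norm]
        exact lt_of_le_of_lt (dist_le_pi_dist y (φ0 x₁) (finSumFinEquiv w)) hy
      obtain ⟨q, hq, hqp, hqcl⟩ := hε (fun w => y (finSumFinEquiv w)) hp
      refine ⟨⟨q, hq⟩, ?_, ?_⟩
      · funext l
        show q (inclVars (finSumFinEquiv.symm l)) = y l
        calc q (inclVars (finSumFinEquiv.symm l))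
            = y (finSumFinEquiv (finSumFinEquiv.symm l)) := congrFun hqp (finSumFinEquiv.symm l)
          _ = y l := by rw [Equiv.apply_symm_apply]
      · rw [Subtype.dist_eq, dist_pi_lt_iff hδ']
        intro u
        rw [dist_eq_norm]
        exact hqcl u
    have hVopen : IsOpen (Set.range φ0) := by
      rw [Metric.isOpen_iff]
      rintro y₁ ⟨x₁, rfl⟩
      obtain ⟨ε, hε0, hε⟩ := hball x₁ 1 one_pos
      refine ⟨ε, hε0, fun y hy => ?_⟩
      obtain ⟨x, hx, -⟩ := hε y (by rwa [Metric.mem_ball] at hy)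
      exact ⟨x, hx⟩
    set ψ : (Fin (m + n) → K) → ↥P.lift := fun y =>
      if h : ∃ x : ↥P.lift, φ0 x = y then h.choose else Classical.arbitrary _ with hψdef
    have hψφ : ∀ x : ↥P.lift, ψ (φ0 x) = x := by
      intro x
      have h : ∃ x' : ↥P.lift, φ0 x' = φ0 x := ⟨x, rfl⟩
      rw [hψdef]
      simp only [dif_pos h]
      exact hφ0inj h.choose_spec
    have hφψ : ∀ y ∈ Set.range φ0, φ0 (ψ y) = y := by
      rintro y ⟨x, rfl⟩
      rw [hψφ x]
    have hψcont : ContinuousOn ψ (Set.range φ0) := by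
      intro y₁ hy₁
      rw [Metric.continuousWithinAt_iff]
      intro δ' hδ'
      obtain ⟨ε, hε0, hε⟩ := hball (ψ y₁) δ' hδ'
      refine ⟨ε, hε0, fun y hyV hyd => ?_⟩
      obtain ⟨x, hx1, hx2⟩ := hε y (by rwa [hφψ y₁ hy₁])
      rw [← hx1, hψφ x]
      exact hx2
    refine ⟨Unit, fun _ => Set.univ, fun _ => φ0, fun x => ⟨(), Set.mem_univ x⟩,
      fun _ => isOpen_univ, fun _ => ⟨Set.range φ0, hVopen, ?_, ?_, ψ, ⟨?_, ?_⟩, hψcont⟩, ?_⟩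
    · exact ⟨fun x _ => ⟨x, rfl⟩, hφ0inj.injOn,
        fun y hy => ⟨hy.choose, Set.mem_univ _, hy.choose_spec⟩⟩
    · exact (continuous_pi fun l =>
        (continuous_apply _).comp continuous_subtype_val).continuousOn
    · exact fun x _ => hψφ x
    · exact fun y hy => hφψ y hy
    · intro i j x _
      refine ⟨1, one_pos,
        fun l => MvPowerSeries.C (σ := Fin (m + n)) (R := K) (φ0 x l) + MvPowerSeries.X l,
        fun z _ _ l => ?_⟩
      rw [DSemi.evalPS_C_add_X]
      ring
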